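/- A set S ⊆ ℝⁿ is MICP representable if and only if there exist d, p ∈ ℕ, a convex set C ⊆ ℝᵈ, and a closed convex family (B_z)_{z∈C} of sets in ℝ^(n+p) such that S = ⋃_{z ∈ C ∩ ℤᵈ} proj_x(B_z). -/

import Mathlib

open Pointwise Filter Topology

def IsIntegerVec {d : ℕ} (z : Fin d → ℝ) : Prop := ∀ i, ∃ m : ℤ, z i = (m : ℝ)

def MICPRepresentable {n : ℕ} (S : Set (Fin n → ℝ)) : Prop :=
  ∃ (p d : ℕ) (M : Set ((Fin n → ℝ) × (Fin p → ℝ) × (Fin d → ℝ))),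
    IsClosed M ∧ Convex ℝ M ∧
    S = {x | ∃ (y : Fin p → ℝ) (z : Fin d → ℝ), IsIntegerVec z ∧ (x, y, z) ∈ M}

/-- A convex family of convex sets indexed by a convex set. -/
def ConvexFamily {E F : Type*} [AddCommMonoid E] [SMul ℝ E]
    [AddCommMonoid F] [SMul ℝ F] (C : Set E) (A : E → Set F) : Prop :=
  (∀ z ∈ C, Convex ℝ (A z)) ∧
  ∀ z ∈ C, ∀ z' ∈ C, ∀ a b : ℝ, 0 ≤ a → 0 ≤ b → a + b = 1 →
    a • A z + b • A z' ⊆ A (a • z + b • z')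

/-- The family is closed: each member is closed, and limits of convergent
sequences `x_m ∈ A (z_m)` with `z_m → z ∈ C` lie in `A z`. -/
def ClosedFamily {E F : Type*} [TopologicalSpace E] [TopologicalSpace F]
    (C : Set E) (A : E → Set F) : Prop :=
  (∀ z ∈ C, IsClosed (A z)) ∧
  ∀ (zs : ℕ → E) (xs : ℕ → F) (z : E) (x : F),
    (∀ m, zs m ∈ C) → (∀ m, xs m ∈ A (zs m)) → z ∈ C →
    Tendsto zs atTop (nhds z) → Tendsto xs atTop (nhds x) → x ∈ A z


lemma bary0 {E : Type*} [NormedAddCommGroup E] [NormedSpace ℝ E] [FiniteDimensional ℝ E]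
    (S1 : Set E) (hcl : (0 : E) ∈ closure (convexHull ℝ S1))
    (hdeg : ∀ ℓ : E →L[ℝ] ℝ, (∀ s ∈ S1, ℓ s ≤ 0) → ∀ s ∈ S1, ℓ s = 0) :
    (0 : E) ∈ convexHull ℝ S1 := by
  by_contra h0
  set V : Submodule ℝ E := Submodule.span ℝ S1 with hV
  have hS1V : S1 ⊆ (V : Set E) := Submodule.subset_span
  set Sh : Set V := Subtype.val ⁻¹' S1 with hSh
  have himg : Subtype.val '' Sh = S1 := by
    rw [hSh, Set.image_preimage_eq_inter_range, Subtype.range_coe]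
    exact Set.inter_eq_self_of_subset_left hS1V
  have hullimg : Subtype.val '' (convexHull ℝ Sh) = convexHull ℝ S1 := by
    have := LinearMap.image_convexHull (V.subtype) Sh
    simpa [himg] using this
  have hVclosed : IsClosed (V : Set E) := Submodule.closed_of_finiteDimensional V
  have hce : Topology.IsClosedEmbedding (Subtype.val : V → E) :=
    Topology.IsClosedEmbedding.subtypeVal hVclosed
  -- transfer closure membership into V
  have h0' : (0 : V) ∈ closure (convexHull ℝ Sh) := by
    have h1 : (0:E) ∈ closure (Subtype.val '' (convexHull ℝ Sh)) := by rw [hullimg]; exact hcl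
    rw [hce.closure_image_eq] at h1
    obtain ⟨v, hv, hval⟩ := h1
    have : v = 0 := Subtype.val_injective (by simpa using hval)
    rwa [this] at hv
  -- 0 lies in the affine span, hence affine span is everything
  have h0A : (0 : V) ∈ affineSpan ℝ Sh := by
    have hAc : IsClosed ((affineSpan ℝ Sh : AffineSubspace ℝ V) : Set V) :=
      (affineSpan ℝ Sh).closed_of_finiteDimensional
    have h2 := closure_mono (convexHull_subset_affineSpan Sh) h0'
    rwa [hAc.closure_eq] at h2
  have hmemA : ∀ v : V, v ∈ affineSpan ℝ Sh := by
    intro v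
    have key : ∀ (x : E) (hx : x ∈ Submodule.span ℝ S1),
        (⟨x, hx⟩ : V) ∈ affineSpan ℝ Sh := by
      intro x hx
      induction hx using Submodule.span_induction with
      | mem x hxs => exact subset_affineSpan ℝ Sh (by simpa [hSh] using hxs)
      | zero => exact h0A
      | add x y hx hy ihx ihy =>
          have hd : (⟨x, hx⟩ : V) -ᵥ (0:V) ∈ (affineSpan ℝ Sh).direction :=
            AffineSubspace.vsub_mem_direction ihx h0A
          have := AffineSubspace.vadd_mem_of_mem_direction hd ihy
          simpa [vsub_eq_sub, vadd_eq_add] using this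
      | smul a x hx ihx =>
          have hd : (⟨x, hx⟩ : V) -ᵥ (0:V) ∈ (affineSpan ℝ Sh).direction :=
            AffineSubspace.vsub_mem_direction ihx h0A
          have := AffineSubspace.vadd_mem_of_mem_direction
            (Submodule.smul_mem _ a hd) h0A
          simpa [vsub_eq_sub, vadd_eq_add] using this
    have := key (v : E) v.2
    simpa using this
  have hAtop : affineSpan ℝ Sh = ⊤ := by
    rw [eq_top_iff]
    exact fun v _ => hmemA v
  have hconv : Convex ℝ (convexHull ℝ Sh) := convex_convexHull ℝ Sh
  have hint : (interior (convexHull ℝ Sh)).Nonempty := by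
    rw [Convex.interior_nonempty_iff_affineSpan_eq_top hconv, affineSpan_convexHull]
    exact hAtop
  have h0hull : (0 : V) ∉ convexHull ℝ Sh := by
    intro hmem
    exact h0 (by rw [← hullimg]; exact ⟨0, hmem, rfl⟩)
  have h0int : (0 : V) ∉ interior (convexHull ℝ Sh) := fun h => h0hull (interior_subset h)
  obtain ⟨ℓ, hℓ⟩ := geometric_hahn_banach_open_point hconv.interior isOpen_interior h0int
  have hℓ0 : ∀ a ∈ interior (convexHull ℝ Sh), ℓ a < 0 := by
    intro a ha; have := hℓ a ha; simpa using this
  obtain ⟨u, hu⟩ := hint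
  have hle : ∀ w ∈ convexHull ℝ Sh, ℓ w ≤ 0 := by
    intro w hw
    have key : ∀ j : ℕ, (1/(j+2:ℝ)) * ℓ u + (1 - 1/(j+2:ℝ)) * ℓ w < 0 := by
      intro j
      have hj2 : (0:ℝ) < 1/(j+2:ℝ) := by positivity
      have hj1 : (1/(j+2:ℝ)) < 1 := by
        rw [div_lt_one (by positivity)]; linarith [Nat.cast_nonneg (α := ℝ) j]
      have hmem : (1/(j+2:ℝ)) • u + (1 - 1/(j+2:ℝ)) • w ∈ interior (convexHull ℝ Sh) :=
        hconv.combo_interior_self_mem_interior hu hw hj2 (by linarith) (by ring)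
      have := hℓ0 _ hmem
      simpa [map_add, map_smul, smul_eq_mul] using this
    have htend : Tendsto (fun j : ℕ => (1/(j+2:ℝ)) * ℓ u + (1 - 1/(j+2:ℝ)) * ℓ w)
        atTop (𝓝 (0 * ℓ u + (1 - 0) * ℓ w)) := by
      have h2 : Tendsto (fun j : ℕ => 1/(j+2:ℝ)) atTop (𝓝 0) := by
        have := tendsto_one_div_add_atTop_nhds_zero_nat (𝕜 := ℝ)
        have h3 : Tendsto (fun j : ℕ => ((j:ℝ) + 2)) atTop atTop :=
          tendsto_atTop_add_const_right _ 2 tendsto_natCast_atTop_atTop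
        exact tendsto_const_nhds.div_atTop h3
      exact ((h2.mul tendsto_const_nhds).add
        ((tendsto_const_nhds.sub h2).mul tendsto_const_nhds))
    have hle0 := le_of_tendsto htend (Filter.Eventually.of_forall fun j => (key j).le)
    simpa using hle0
  obtain ⟨Q, hQ⟩ := Submodule.exists_isCompl V
  set π : E →ₗ[ℝ] V := V.projectionOnto Q hQ with hπ
  set L : E →L[ℝ] ℝ := LinearMap.toContinuousLinearMap ((ℓ : V →ₗ[ℝ] ℝ).comp π) with hL
  have hLS : ∀ (s : E) (hs : s ∈ S1), L s = ℓ ⟨s, hS1V hs⟩ := by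
    intro s hs
    have : π s = ⟨s, hS1V hs⟩ := by
      have := Submodule.linearProjOfIsCompl_apply_left hQ (⟨s, hS1V hs⟩ : V)
      simpa [hπ] using this
    simp [hL, this]
  have hLle : ∀ s ∈ S1, L s ≤ 0 := by
    intro s hs
    rw [hLS s hs]
    exact hle _ (subset_convexHull ℝ Sh (by simpa [hSh] using hs))
  have hLeq := hdeg L hLle
  have hker : ∀ v : V, ℓ v = 0 := by
    intro v
    have key : ∀ (x : E) (hx : x ∈ Submodule.span ℝ S1), ℓ ⟨x, hx⟩ = 0 := by
      intro x hx
      induction hx using Submodule.span_induction with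
      | mem x hxs => rw [← hLS x hxs]; exact hLeq x hxs
      | zero => exact map_zero ℓ
      | add x y hx hy ihx ihy =>
          have : (⟨x + y, _⟩ : V) = (⟨x, hx⟩ : V) + ⟨y, hy⟩ := rfl
          rw [this, map_add, ihx, ihy, add_zero]
      | smul a x hx ihx =>
          have : (⟨a • x, _⟩ : V) = a • (⟨x, hx⟩ : V) := rfl
          rw [this, map_smul, ihx, smul_zero]
    have := key (v : E) v.2
    simpa using this
  exact absurd (hker u) (ne_of_lt (hℓ0 u hu))

lemma baryGen {E : Type*} [NormedAddCommGroup E] [NormedSpace ℝ E] [FiniteDimensional ℝ E]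
    (S1 : Set E) (b : E) (hcl : b ∈ closure (convexHull ℝ S1))
    (hdeg : ∀ ℓ : E →L[ℝ] ℝ, (∀ s ∈ S1, ℓ s ≤ ℓ b) → ∀ s ∈ S1, ℓ s = ℓ b) :
    b ∈ convexHull ℝ S1 := by
  set g : E → E := fun w => -b + w with hg
  have hgaff : ∀ (A : Set E), g '' (convexHull ℝ A) = convexHull ℝ (g '' A) := by
    intro A
    have h1 := (AffineEquiv.constVAdd ℝ E (-b)).toAffineMap.image_convexHull A
    have h2 : ⇑(AffineEquiv.constVAdd ℝ E (-b)).toAffineMap = g := by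
      funext w
      simp [hg, AffineEquiv.constVAdd]; rfl
    rw [h2] at h1
    exact h1
  have hgcl : ∀ (A : Set E), g '' (closure A) = closure (g '' A) := by
    intro A
    have := (Homeomorph.addLeft (-b)).image_closure A
    simpa [hg] using this
  have h0 : (0 : E) ∈ closure (convexHull ℝ (g '' S1)) := by
    rw [← hgaff, ← hgcl]
    exact ⟨b, hcl, by simp [hg]⟩
  have hdeg' : ∀ ℓ : E →L[ℝ] ℝ, (∀ s ∈ g '' S1, ℓ s ≤ 0) → ∀ s ∈ g '' S1, ℓ s = 0 := by
    intro ℓ hle s hs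
    obtain ⟨u, hu, rfl⟩ := hs
    have h1 : ∀ t ∈ S1, ℓ t ≤ ℓ b := by
      intro t ht
      have := hle (g t) ⟨t, ht, rfl⟩
      simp only [hg, map_add, map_neg] at this
      linarith
    have h2 := hdeg ℓ h1 u hu
    simp only [hg, map_add, map_neg]
    linarith
  have hres := bary0 (g '' S1) h0 hdeg'
  rw [← hgaff] at hres
  obtain ⟨u, hu, huz⟩ := hres
  have hub : u = b := by
    have h3 : -b + u = 0 := huz
    have h4 : u = b := by
      have := congrArg (fun w => b + w) h3
      simpa using this
    exact h4
  rwa [← hub]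


lemma diagExtract (u : ℕ → ℕ → ℝ) (hb : ∀ m k, u m k ∈ Set.Icc (0:ℝ) 1) :
    ∃ σ : ℕ → ℕ, StrictMono σ ∧ ∃ p : ℕ → ℝ,
      ∀ k, Tendsto (fun m => u (σ m) k) atTop (𝓝 (p k)) := by
  have hcomp : IsCompact (Set.pi Set.univ fun _ : ℕ => Set.Icc (0:ℝ) 1) :=
    isCompact_univ_pi fun _ => isCompact_Icc
  have hx : ∀ m, u m ∈ Set.pi Set.univ fun _ : ℕ => Set.Icc (0:ℝ) 1 := by
    intro m; exact fun k _ => hb m k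
  obtain ⟨a, _, σ, hσ, ha⟩ := hcomp.tendsto_subseq hx
  refine ⟨σ, hσ, a, fun k => ?_⟩
  have := tendsto_pi_nhds.1 ha k
  exact this

universe u v

variable {E : Type u} {F : Type v}

lemma finfam [AddCommGroup E] [Module ℝ E] [AddCommGroup F] [Module ℝ F]
    {C : Set E} {B : E → Set F}
    (hC : Convex ℝ C)
    (hCF : (∀ z ∈ C, Convex ℝ (B z)) ∧
      ∀ z ∈ C, ∀ z' ∈ C, ∀ a b : ℝ, 0 ≤ a → 0 ≤ b → a + b = 1 →
        a • B z + b • B z' ⊆ B (a • z + b • z'))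
    {ι : Type*} (t : Finset ι) (w : ι → ℝ) (zp : ι → E) (v : ι → F)
    (hw0 : ∀ i ∈ t, 0 ≤ w i) (hw1 : ∑ i ∈ t, w i = 1)
    (hzp : ∀ i ∈ t, zp i ∈ C) (hv : ∀ i ∈ t, v i ∈ B (zp i)) :
    (∑ i ∈ t, w i • zp i) ∈ C ∧ (∑ i ∈ t, w i • v i) ∈ B (∑ i ∈ t, w i • zp i) := by
  classical
  revert hw0 hw1 hzp hv
  induction t using Finset.induction generalizing w with
  | empty => intro _ hw1 _ _; simp at hw1
  | insert j t hit IH =>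
    intro hw0 hw1 hzp hv
    rw [Finset.sum_insert hit] at hw1 ⊢
    rw [Finset.sum_insert hit]
    have hwj : 0 ≤ w j := hw0 j (Finset.mem_insert_self j t)
    have hw0' : ∀ i ∈ t, 0 ≤ w i := fun i hi => hw0 i (Finset.mem_insert_of_mem hi)
    have hzpj : zp j ∈ C := hzp j (Finset.mem_insert_self j t)
    have hvj : v j ∈ B (zp j) := hv j (Finset.mem_insert_self j t)
    by_cases hb : ∑ i ∈ t, w i = 0
    · -- all other weights vanish
      have hall : ∀ i ∈ t, w i = 0 := by
        intro i hi
        exact (Finset.sum_eq_zero_iff_of_nonneg hw0').1 hb i hi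
      have h1 : ∑ i ∈ t, w i • zp i = 0 := Finset.sum_eq_zero fun i hi => by
        rw [hall i hi, zero_smul]
      have h2 : ∑ i ∈ t, w i • v i = 0 := Finset.sum_eq_zero fun i hi => by
        rw [hall i hi, zero_smul]
      have hwj1 : w j = 1 := by rw [hb, add_zero] at hw1; exact hw1
      rw [h1, h2, hwj1, add_zero, add_zero, one_smul, one_smul]
      exact ⟨hzpj, hvj⟩
    · have hbpos : 0 < ∑ i ∈ t, w i :=
        lt_of_le_of_ne (Finset.sum_nonneg hw0') (Ne.symm hb)
      set b := ∑ i ∈ t, w i with hbdef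
      have hw1' : ∑ i ∈ t, (w i / b) = 1 := by
        rw [← Finset.sum_div]; exact div_self hb
      have hw0'' : ∀ i ∈ t, 0 ≤ w i / b := fun i hi => div_nonneg (hw0' i hi) hbpos.le
      obtain ⟨hζC, hωB⟩ := IH (fun i => w i / b) hw0'' hw1'
        (fun i hi => hzp i (Finset.mem_insert_of_mem hi))
        (fun i hi => hv i (Finset.mem_insert_of_mem hi))
      -- combine
      have hmemC : w j • zp j + b • (∑ i ∈ t, (w i / b) • zp i) ∈ C :=
        hC hzpj hζC hwj hbpos.le hw1
      have hmemB : w j • v j + b • (∑ i ∈ t, (w i / b) • v i) ∈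
          B (w j • zp j + b • (∑ i ∈ t, (w i / b) • zp i)) := by
        apply hCF.2 (zp j) hzpj _ hζC (w j) b hwj hbpos.le hw1
        exact Set.add_mem_add (Set.smul_mem_smul_set hvj) (Set.smul_mem_smul_set hωB)
      have hsc : ∀ (g : ι → E), b • ∑ i ∈ t, (w i / b) • g i = ∑ i ∈ t, w i • g i := by
        intro g
        rw [Finset.smul_sum]
        refine Finset.sum_congr rfl fun i hi => ?_
        rw [smul_smul, mul_div_cancel₀]
        exact hb
      have hscF : ∀ (g : ι → F), b • ∑ i ∈ t, (w i / b) • g i = ∑ i ∈ t, w i • g i := by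
        intro g
        rw [Finset.smul_sum]
        refine Finset.sum_congr rfl fun i hi => ?_
        rw [smul_smul, mul_div_cancel₀]
        exact hb
      rw [hsc zp] at hmemC hmemB
      rw [hscF v] at hmemB
      exact ⟨hmemC, hmemB⟩


lemma repack {n p d : ℕ} (τ : ℕ → (Fin d → ℝ)) (φ : ℕ → ℝ)
    (B : (Fin d → ℝ) → Set ((Fin n → ℝ) × (Fin p → ℝ)))
    (hBconv : ∀ k, Convex ℝ (B (τ k)))
    (q : (Fin n → ℝ) × (Fin p → ℝ) × (Fin (d+1) → ℝ))
    (hq : q ∈ convexHull ℝ {r : (Fin n → ℝ) × (Fin p → ℝ) × (Fin (d+1) → ℝ) |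
      ∃ (k : ℕ) (u : (Fin n → ℝ) × (Fin p → ℝ)), u ∈ B (τ k) ∧
        r = (u.1, u.2, Fin.snoc (τ k) (φ k))}) :
    ∃ (N : ℕ) (μ : ℕ → ℝ) (v : ℕ → ((Fin n → ℝ) × (Fin p → ℝ))),
      (∀ k, 0 ≤ μ k) ∧ (∀ k, N ≤ k → μ k = 0) ∧ (∑ k ∈ Finset.range N, μ k = 1) ∧
      (∀ k, μ k ≠ 0 → v k ∈ B (τ k)) ∧
      ((q.1, q.2.1) = ∑ k ∈ Finset.range N, μ k • v k) ∧
      (q.2.2 = ∑ k ∈ Finset.range N, μ k • (Fin.snoc (τ k) (φ k) : Fin (d+1) → ℝ)) := by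
  classical
  rw [convexHull_eq] at hq
  obtain ⟨ι, t, w, zf, hw0, hw1, hzG, hcm⟩ := hq
  rw [Finset.centerMass_eq_of_sum_1 _ _ hw1] at hcm
  have hrep : ∀ i ∈ t, ∃ (k : ℕ) (u : (Fin n → ℝ) × (Fin p → ℝ)), u ∈ B (τ k) ∧
      zf i = (u.1, u.2, Fin.snoc (τ k) (φ k)) := fun i hi => hzG i hi
  choose! κ uu hmem heq using hrep
  set N := t.sup κ + 1 with hN
  have hκN : ∀ i ∈ t, κ i ∈ Finset.range N := by
    intro i hi
    rw [Finset.mem_range, hN]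
    exact Nat.lt_succ_of_le (Finset.le_sup hi)
  set μ : ℕ → ℝ := fun k => ∑ i ∈ t.filter (fun i => κ i = k), w i with hμ
  set v : ℕ → ((Fin n → ℝ) × (Fin p → ℝ)) := fun k =>
    if h : μ k = 0 then 0 else (μ k)⁻¹ • ∑ i ∈ t.filter (fun i => κ i = k), w i • uu i with hv
  have hμ0 : ∀ k, 0 ≤ μ k := by
    intro k
    exact Finset.sum_nonneg fun i hi => hw0 i (Finset.mem_of_mem_filter i hi)
  have hμzero : ∀ k, N ≤ k → μ k = 0 := by
    intro k hk
    rw [hμ]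
    apply Finset.sum_eq_zero
    intro i hi
    exfalso
    have h1 := (Finset.mem_filter.1 hi).2
    have h2 := hκN i (Finset.mem_filter.1 hi).1
    rw [h1] at h2
    rw [Finset.mem_range] at h2
    omega
  -- fiberwise identities
  have hfiber : ∀ (V : Type) [inst : AddCommMonoid V] [inst2 : Module ℝ V] (g : ℕ → V),
      ∑ k ∈ Finset.range N, μ k • g k = ∑ i ∈ t, w i • g (κ i) := by
    intro V _ _ g
    rw [← Finset.sum_fiberwise_of_maps_to hκN (fun i => w i • g (κ i))]
    refine Finset.sum_congr rfl fun k _ => ?_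
    rw [hμ, Finset.sum_smul]
    refine Finset.sum_congr rfl fun i hi => ?_
    rw [(Finset.mem_filter.1 hi).2]
  have hμ1 : ∑ k ∈ Finset.range N, μ k = 1 := by
    rw [← hw1, ← Finset.sum_fiberwise_of_maps_to hκN w]
  have hμv : ∀ k, μ k • v k = ∑ i ∈ t.filter (fun i => κ i = k), w i • uu i := by
    intro k
    by_cases h : μ k = 0
    · rw [h, zero_smul]
      symm
      apply Finset.sum_eq_zero
      intro i hi
      have hwi0 : w i = 0 := by
        have := (Finset.sum_eq_zero_iff_of_nonneg
          (fun j hj => hw0 j (Finset.mem_of_mem_filter j hj))).1 h i hi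
        exact this
      rw [hwi0, zero_smul]
    · rw [hv]
      simp only [h, dif_neg, not_false_iff]
      rw [smul_inv_smul₀ h]
  have hvB : ∀ k, μ k ≠ 0 → v k ∈ B (τ k) := by
    intro k hk
    have hpos : 0 < μ k := lt_of_le_of_ne (hμ0 k) (Ne.symm hk)
    have hcm2 : (t.filter (fun i => κ i = k)).centerMass w uu ∈ B (τ k) := by
      apply (hBconv k).centerMass_mem
      · intro i hi; exact hw0 i (Finset.mem_of_mem_filter i hi)
      · rw [← hμ] at *; exact hpos
      · intro i hi
        have h2 := (Finset.mem_filter.1 hi).2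
        have := hmem i (Finset.mem_of_mem_filter i hi)
        rwa [h2] at this
    rw [hv]
    simp only [hk, dif_neg, not_false_iff]
    exact hcm2
  refine ⟨N, μ, v, hμ0, hμzero, hμ1, hvB, ?_, ?_⟩
  · -- (x,y) component
    have h1 : ∑ k ∈ Finset.range N, μ k • v k = ∑ i ∈ t, w i • uu i := by
      rw [← Finset.sum_fiberwise_of_maps_to hκN (fun i => w i • uu i)]
      exact Finset.sum_congr rfl fun k _ => hμv k
    rw [h1, ← hcm]
    apply Prod.ext
    · simp only [Prod.fst_sum]
      refine Finset.sum_congr rfl fun i hi => ?_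
      rw [heq i hi]
      simp [Prod.smul_mk]
    · simp only [Prod.snd_sum, Prod.fst_sum]
      refine Finset.sum_congr rfl fun i hi => ?_
      rw [heq i hi]
      simp [Prod.smul_mk]
  · -- z' component
    rw [hfiber (Fin (d+1) → ℝ) (fun k => (Fin.snoc (τ k) (φ k) : Fin (d+1) → ℝ)), ← hcm]
    simp only [Prod.snd_sum]
    refine Finset.sum_congr rfl fun i hi => ?_
    rw [heq i hi]
    simp [Prod.smul_mk]

theorem fwdAux {n : ℕ} (S : Set (Fin n → ℝ)) (h : MICPRepresentable S) :
    ∃ (d p : ℕ) (C : Set (Fin d → ℝ))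
        (B : (Fin d → ℝ) → Set ((Fin n → ℝ) × (Fin p → ℝ))),
        Convex ℝ C ∧ ConvexFamily C B ∧ ClosedFamily C B ∧
        S = ⋃ z ∈ {z ∈ C | IsIntegerVec z}, Prod.fst '' B z := by
  obtain ⟨p, d, M, hMcl, hMcv, hMS⟩ := h
  refine ⟨d, p, Set.univ, fun z => {w | (w.1, w.2, z) ∈ M}, convex_univ, ⟨?_, ?_⟩, ⟨?_, ?_⟩, ?_⟩
  · -- each member convex
    intro z _
    intro w hw w' hw' a b ha hb hab
    have h2 := hMcv hw hw' ha hb hab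
    have hz : a • z + b • z = z := Convex.combo_self hab z
    simpa [Prod.smul_mk, Prod.mk_add_mk, hz] using h2
  · -- combination property
    intro z _ z' _ a b ha hb hab q hq
    obtain ⟨u, hu, v, hv, rfl⟩ := Set.mem_add.1 hq
    obtain ⟨w, hw, rfl⟩ := hu
    obtain ⟨w', hw', rfl⟩ := hv
    have := hMcv hw hw' ha hb hab
    simpa [Prod.smul_mk, Prod.mk_add_mk] using this
  · -- closed members
    intro z _
    have : Continuous fun w : (Fin n → ℝ) × (Fin p → ℝ) => (w.1, w.2, z) := by fun_prop
    exact hMcl.preimage this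
  · -- sequential closedness
    intro zs xs z x hzs hxs _ hz hx
    have hx1 : Tendsto (fun m => (xs m).1) atTop (𝓝 x.1) :=
      (continuous_fst.tendsto x).comp hx
    have hx2 : Tendsto (fun m => (xs m).2) atTop (𝓝 x.2) :=
      (continuous_snd.tendsto x).comp hx
    have ht : Tendsto (fun m => ((xs m).1, (xs m).2, zs m)) atTop (𝓝 (x.1, x.2, z)) :=
      by rw [nhds_prod_eq, nhds_prod_eq]; exact hx1.prodMk (hx2.prodMk hz)
    exact hMcl.mem_of_tendsto ht (Filter.Eventually.of_forall fun m => hxs m)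
  · -- set equality
    rw [hMS]
    ext x
    simp only [Set.mem_setOf_eq, Set.mem_iUnion, Set.mem_image, Set.mem_sep_iff, Set.mem_univ,
      true_and]
    constructor
    · rintro ⟨y, z, hz, hM⟩
      exact ⟨z, hz, (x, y), hM, rfl⟩
    · rintro ⟨z, hz, w, hw, hwx⟩
      exact ⟨w.2, z, hz, by simpa [← hwx] using hw⟩

theorem bwdAux {n : ℕ} (S : Set (Fin n → ℝ))
    (h : ∃ (d p : ℕ) (C : Set (Fin d → ℝ))
        (B : (Fin d → ℝ) → Set ((Fin n → ℝ) × (Fin p → ℝ))),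
        Convex ℝ C ∧ ConvexFamily C B ∧ ClosedFamily C B ∧
        S = ⋃ z ∈ {z ∈ C | IsIntegerVec z}, Prod.fst '' B z) :
    MICPRepresentable S := by
  classical
  obtain ⟨d, p, C, B, hC, hCF, hClF, hS⟩ := h
  set T : Set (Fin d → ℝ) := {z ∈ C | IsIntegerVec z} with hT
  by_cases hTe : T = ∅
  · refine ⟨0, 0, ∅, isClosed_empty, convex_empty, ?_⟩
    rw [hS, hTe]
    ext x
    simp
  · have hTne : T.Nonempty := Set.nonempty_iff_ne_empty.2 hTe
    have hTc : T.Countable := by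
      have hsub : T ⊆ Set.range (fun (m : Fin d → ℤ) => (fun i => (m i : ℝ) : Fin d → ℝ)) := by
        intro z hz
        obtain ⟨-, hzi⟩ := hz
        choose mz hmz using hzi
        exact ⟨mz, funext fun i => (hmz i).symm⟩
      exact (Set.countable_range _).mono hsub
    obtain ⟨τ, hτ⟩ := hTc.exists_eq_range hTne
    have hτT : ∀ k, τ k ∈ T := fun k => hτ ▸ Set.mem_range_self k
    have hτC : ∀ k, τ k ∈ C := fun k => (hτT k).1
    have hτInt : ∀ k, IsIntegerVec (τ k) := fun k => (hτT k).2
    set φ : ℕ → ℝ := fun k => (2:ℝ)^k * ((⌈‖τ k‖⌉₊ : ℝ) + 1) with hφ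
    have hφ2 : ∀ k, (2:ℝ)^k ≤ φ k := by
      intro k
      rw [hφ]
      simp only
      nth_rewrite 1 [← mul_one ((2:ℝ)^k)]
      apply mul_le_mul_of_nonneg_left _ (by positivity)
      have h1 : (0:ℝ) ≤ (⌈‖τ k‖⌉₊ : ℝ) := Nat.cast_nonneg _
      linarith
    have hφτ : ∀ k, (2:ℝ)^k * ‖τ k‖ ≤ φ k := by
      intro k
      apply mul_le_mul_of_nonneg_left _ (by positivity)
      have h1 : ‖τ k‖ ≤ (⌈‖τ k‖⌉₊ : ℝ) := Nat.le_ceil _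
      linarith
    have hφ0 : ∀ k, 0 ≤ φ k := fun k => le_trans (by positivity) (hφ2 k)
    have hφint : ∀ k, ∃ m : ℤ, φ k = (m : ℝ) := by
      intro k
      refine ⟨(2^k * (⌈‖τ k‖⌉₊ + 1) : ℕ), ?_⟩
      rw [hφ]
      push_cast
      ring
    set G : Set ((Fin n → ℝ) × (Fin p → ℝ) × (Fin (d+1) → ℝ)) :=
      {r | ∃ (k : ℕ) (u : (Fin n → ℝ) × (Fin p → ℝ)), u ∈ B (τ k) ∧
        r = (u.1, u.2, Fin.snoc (τ k) (φ k))} with hG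
    refine ⟨p, d+1, closure (convexHull ℝ G), isClosed_closure,
      (convex_convexHull ℝ G).closure, ?_⟩
    ext x
    simp only [Set.mem_setOf_eq]
    constructor
    · intro hx
      rw [hS] at hx
      simp only [Set.mem_iUnion, Set.mem_image, exists_prop] at hx
      obtain ⟨z, hzT, w, hwB, hwx⟩ := hx
      rw [hτ] at hzT
      obtain ⟨k, rfl⟩ := hzT
      refine ⟨w.2, Fin.snoc (τ k) (φ k), ?_, ?_⟩
      · intro i
        refine Fin.lastCases ?_ ?_ i
        · rw [Fin.snoc_last]
          exact hφint k
        · intro j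
          rw [Fin.snoc_castSucc]
          exact hτInt k j
      · apply subset_closure
        apply subset_convexHull
        exact ⟨k, w, hwB, by rw [← hwx]⟩
    · rintro ⟨y, z', hint, hmem⟩
      obtain ⟨q, hqhull, hqlim⟩ := mem_closure_iff_seq_limit.1 hmem
      have hrep := fun m => repack τ φ B (fun k => hCF.1 _ (hτC k)) (q m) (hqhull m)
      choose N μ v hμ0 hμzero hμ1 hvB hxyeq hzeq using hrep
      have hμle1 : ∀ m k, μ m k ≤ 1 := by
        intro m k
        by_cases hk : k < N m
        · calc μ m k ≤ ∑ j ∈ Finset.range (N m), μ m j :=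
              Finset.single_le_sum (fun j _ => hμ0 m j) (Finset.mem_range.2 hk)
          _ = 1 := hμ1 m
        · rw [hμzero m k (le_of_not_gt hk)]; exact zero_le_one
      set ζ : ℕ → (Fin d → ℝ) := fun m => ∑ k ∈ Finset.range (N m), μ m k • τ k with hζ
      set ω : ℕ → (Fin n → ℝ) × (Fin p → ℝ) := fun m => ((q m).1, (q m).2.1) with hω
      set c : ℕ → ℝ := fun m => ∑ k ∈ Finset.range (N m), μ m k * φ k with hc
      set zh : Fin d → ℝ := fun j => z' j.castSucc with hzh
      have hζq : ∀ m, ζ m = fun j => (q m).2.2 j.castSucc := by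
        intro m
        funext j
        rw [hζ]
        simp only
        rw [hzeq m, Finset.sum_apply, Finset.sum_apply]
        refine Finset.sum_congr rfl fun k _ => ?_
        simp [Fin.snoc_castSucc]
      have hcq : ∀ m, c m = (q m).2.2 (Fin.last d) := by
        intro m
        rw [hc]
        simp only
        rw [hzeq m, Finset.sum_apply]
        refine Finset.sum_congr rfl fun k _ => ?_
        simp [Fin.snoc_last]
      have hfam : ∀ m, ζ m ∈ C ∧ ω m ∈ B (ζ m) := by
        intro m
        have hω' : ω m = ∑ k ∈ Finset.range (N m), μ m k • v m k := hxyeq m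
        set t : Finset ℕ := (Finset.range (N m)).filter (fun k => μ m k ≠ 0) with ht
        have hfiltτ : ∑ k ∈ t, μ m k • τ k = ∑ k ∈ Finset.range (N m), μ m k • τ k := by
          apply Finset.sum_filter_of_ne
          intro k _ hkne hzero
          exact hkne (by rw [hzero, zero_smul])
        have hfiltv : ∑ k ∈ t, μ m k • v m k = ∑ k ∈ Finset.range (N m), μ m k • v m k := by
          apply Finset.sum_filter_of_ne
          intro k _ hkne hzero
          exact hkne (by rw [hzero, zero_smul])
        have h1 : ∑ k ∈ t, μ m k = 1 := by
          rw [← hμ1 m]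
          apply Finset.sum_filter_of_ne
          intro k _ hkne
          exact hkne
        have hfin := finfam hC ⟨hCF.1, hCF.2⟩ t (μ m) τ (v m)
          (fun k _ => hμ0 m k) h1 (fun k _ => hτC k)
          (fun k hk => hvB m k (Finset.mem_filter.1 hk).2)
        rw [hfiltτ, hfiltv] at hfin
        rw [hζ, hω']
        exact hfin
      have hcnn : ∀ m, 0 ≤ c m := by
        intro m
        rw [hc]
        exact Finset.sum_nonneg fun k _ => mul_nonneg (hμ0 m k) (hφ0 k)
      have hq22 : Tendsto (fun m => (q m).2.2) atTop (𝓝 z') :=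
        ((continuous_snd.comp continuous_snd).tendsto ((x, y, z'))).comp hqlim
      have hζlim : Tendsto ζ atTop (𝓝 zh) := by
        rw [tendsto_pi_nhds]
        intro j
        have h1 := (tendsto_pi_nhds.1 hq22) j.castSucc
        have h2 : (fun m => ζ m j) = fun m => (q m).2.2 j.castSucc := by
          funext m
          rw [hζq m]
        rw [h2]
        exact h1
      have hclim : Tendsto c atTop (𝓝 (z' (Fin.last d))) := by
        have h1 := (tendsto_pi_nhds.1 hq22) (Fin.last d)
        have h2 : c = fun m => (q m).2.2 (Fin.last d) := funext hcq
        rw [h2]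
        exact h1
      have hωlim : Tendsto ω atTop (𝓝 (x, y)) := by
        have h1 : Tendsto (fun m => (q m).1) atTop (𝓝 x) :=
          (continuous_fst.tendsto _).comp hqlim
        have h2 : Tendsto (fun m => (q m).2.1) atTop (𝓝 y) :=
          ((continuous_fst.comp continuous_snd).tendsto _).comp hqlim
      
        rw [hω, nhds_prod_eq]
        exact h1.prodMk h2
      obtain ⟨B₀, hB₀mem⟩ := hclim.bddAbove_range
      have hB₀ : ∀ m, c m ≤ B₀ := fun m => hB₀mem (Set.mem_range_self m)
      have htail : ∀ m I, (∑ k ∈ Finset.range I, μ m k ≤ 1) ∧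
          (1 - B₀/2^I ≤ ∑ k ∈ Finset.range I, μ m k) ∧
          ‖ζ m - ∑ k ∈ Finset.range I, μ m k • τ k‖ ≤ B₀/2^I := by
        intro m I
        set Nm := max (N m) I with hNm
        have hIN : I ≤ Nm := le_max_right _ _
        have hNN : N m ≤ Nm := le_max_left _ _
        have hzero' : ∀ k, k ∈ Finset.range Nm → k ∉ Finset.range (N m) → μ m k = 0 := by
          intro k _ hk2
          exact hμzero m k (le_of_not_gt (fun hlt => hk2 (Finset.mem_range.2 hlt)))
        have hμ1' : ∑ k ∈ Finset.range Nm, μ m k = 1 := by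
          rw [← hμ1 m]
          symm
          apply Finset.sum_subset (Finset.range_subset_range.2 hNN)
          exact hzero'
        have hζ' : ζ m = ∑ k ∈ Finset.range Nm, μ m k • τ k := by
          rw [hζ]
          simp only
          apply Finset.sum_subset (Finset.range_subset_range.2 hNN)
          intro k h1 h2
          rw [hzero' k h1 h2, zero_smul]
        have hc' : ∑ k ∈ Finset.range Nm, μ m k * φ k ≤ B₀ := by
          have : ∑ k ∈ Finset.range Nm, μ m k * φ k = c m := by
            rw [hc]
            simp only
            symm
            apply Finset.sum_subset (Finset.range_subset_range.2 hNN)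
            intro k h1 h2
            rw [hzero' k h1 h2, zero_mul]
          rw [this]
          exact hB₀ m
        have hIcosub : Finset.Ico I Nm ⊆ Finset.range Nm := by
          intro k hk
          rw [Finset.mem_range]
          exact (Finset.mem_Ico.1 hk).2
        have hkey : ∀ (g : ℕ → ℝ), (∀ k, I ≤ k → 0 ≤ g k ∧ 2^I * g k ≤ μ m k * φ k) →
            ∑ k ∈ Finset.Ico I Nm, g k ≤ B₀ / 2^I := by
          intro g hg
          rw [le_div_iff₀ (by positivity : (0:ℝ) < 2^I)]
          calc (∑ k ∈ Finset.Ico I Nm, g k) * 2^I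
              = ∑ k ∈ Finset.Ico I Nm, 2^I * g k := by
                rw [Finset.sum_mul]
                exact Finset.sum_congr rfl fun k _ => mul_comm _ _
            _ ≤ ∑ k ∈ Finset.Ico I Nm, μ m k * φ k :=
                Finset.sum_le_sum fun k hk => (hg k (Finset.mem_Ico.1 hk).1).2
            _ ≤ ∑ k ∈ Finset.range Nm, μ m k * φ k :=
                Finset.sum_le_sum_of_subset_of_nonneg hIcosub
                  (fun k _ _ => mul_nonneg (hμ0 m k) (hφ0 k))
            _ ≤ B₀ := hc'
        have hpow : ∀ k, I ≤ k → (2:ℝ)^I ≤ 2^k := fun k hk =>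
          pow_le_pow_right₀ (by norm_num) hk
        refine ⟨?_, ?_, ?_⟩
        · rw [← hμ1']
          exact Finset.sum_le_sum_of_subset_of_nonneg (Finset.range_subset_range.2 hIN)
            (fun k _ _ => hμ0 m k)
        · have h2 : ∑ k ∈ Finset.Ico I Nm, μ m k ≤ B₀ / 2^I := by
            apply hkey
            intro k hk
            refine ⟨hμ0 m k, ?_⟩
            calc (2:ℝ)^I * μ m k ≤ (2:ℝ)^k * μ m k :=
                mul_le_mul_of_nonneg_right (hpow k hk) (hμ0 m k)
              _ ≤ φ k * μ m k := mul_le_mul_of_nonneg_right (hφ2 k) (hμ0 m k)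
              _ = μ m k * φ k := mul_comm _ _
          have h3 := Finset.sum_range_add_sum_Ico (μ m) hIN
          linarith [hμ1' ▸ h3]
        · have hdiff : ζ m - ∑ k ∈ Finset.range I, μ m k • τ k
              = ∑ k ∈ Finset.Ico I Nm, μ m k • τ k := by
            rw [hζ']
            rw [← Finset.sum_range_add_sum_Ico (fun k => μ m k • τ k) hIN]
            abel
          rw [hdiff]
          calc ‖∑ k ∈ Finset.Ico I Nm, μ m k • τ k‖
              ≤ ∑ k ∈ Finset.Ico I Nm, ‖μ m k • τ k‖ := norm_sum_le _ _
            _ = ∑ k ∈ Finset.Ico I Nm, μ m k * ‖τ k‖ := by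
                refine Finset.sum_congr rfl fun k _ => ?_
                rw [norm_smul, Real.norm_of_nonneg (hμ0 m k)]
            _ ≤ B₀ / 2^I := by
                apply hkey
                intro k hk
                refine ⟨mul_nonneg (hμ0 m k) (norm_nonneg _), ?_⟩
                calc (2:ℝ)^I * (μ m k * ‖τ k‖) = μ m k * ((2:ℝ)^I * ‖τ k‖) := by ring
                  _ ≤ μ m k * ((2:ℝ)^k * ‖τ k‖) := by
                      apply mul_le_mul_of_nonneg_left _ (hμ0 m k)
                      exact mul_le_mul_of_nonneg_right (hpow k hk) (norm_nonneg _)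
                  _ ≤ μ m k * φ k := mul_le_mul_of_nonneg_left (hφτ k) (hμ0 m k)
      obtain ⟨σ, hσ, P, hP⟩ := diagExtract (fun m k => μ m k)
        (fun m k => ⟨hμ0 m k, hμle1 m k⟩)
      have hP0 : ∀ k, 0 ≤ P k := fun k =>
        ge_of_tendsto (hP k) (Eventually.of_forall fun m => hμ0 (σ m) k)
      set s : ℕ → ℝ := fun I => ∑ k ∈ Finset.range I, P k with hsdef
      set W : ℕ → (Fin d → ℝ) := fun I => ∑ k ∈ Finset.range I, P k • τ k with hWdef
      have hslim : ∀ I, Tendsto (fun m => ∑ k ∈ Finset.range I, μ (σ m) k) atTop (𝓝 (s I)) :=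
        fun I => tendsto_finset_sum _ (fun k _ => hP k)
      have hWlim : ∀ I, Tendsto (fun m => ∑ k ∈ Finset.range I, μ (σ m) k • τ k)
          atTop (𝓝 (W I)) :=
        fun I => tendsto_finset_sum _ (fun k _ => (hP k).smul_const (τ k))
      have hζσ : Tendsto (fun m => ζ (σ m)) atTop (𝓝 zh) := hζlim.comp hσ.tendsto_atTop
      have hs_ub : ∀ I, s I ≤ 1 := fun I =>
        le_of_tendsto (hslim I) (Eventually.of_forall fun m => (htail (σ m) I).1)
      have hs_lb : ∀ I, 1 - B₀/2^I ≤ s I := fun I =>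
        ge_of_tendsto (hslim I) (Eventually.of_forall fun m => (htail (σ m) I).2.1)
      have hWb : ∀ I, ‖zh - W I‖ ≤ B₀/2^I := by
        intro I
        have hnt : Tendsto (fun m => ‖ζ (σ m) - ∑ k ∈ Finset.range I, μ (σ m) k • τ k‖)
            atTop (𝓝 ‖zh - W I‖) := (hζσ.sub (hWlim I)).norm
        exact le_of_tendsto hnt (Eventually.of_forall fun m => (htail (σ m) I).2.2)
      have h2I : Tendsto (fun I : ℕ => B₀/2^I) atTop (𝓝 0) := by
        have h1 : Tendsto (fun I : ℕ => ((1:ℝ)/2)^I) atTop (𝓝 0) :=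
          tendsto_pow_atTop_nhds_zero_of_lt_one (by norm_num) (by norm_num)
        have h2 : (fun I : ℕ => B₀/2^I) = fun I => B₀ * ((1:ℝ)/2)^I := by
          funext I
          rw [div_pow]
          field_simp
          simp
        rw [h2]
        simpa using h1.const_mul B₀
      have hslim1 : Tendsto s atTop (𝓝 1) := by
        have hlow : Tendsto (fun I : ℕ => 1 - B₀/2^I) atTop (𝓝 1) := by
          have := (tendsto_const_nhds (x := (1:ℝ)) (f := atTop (α := ℕ))).sub h2I
          simpa using this
        exact tendsto_of_tendsto_of_tendsto_of_le_of_le hlow tendsto_const_nhds hs_lb hs_ub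
      have hWlimz : Tendsto W atTop (𝓝 zh) := by
        rw [← tendsto_sub_nhds_zero_iff]
        apply squeeze_zero_norm _ h2I
        intro I
        rw [norm_sub_rev]
        exact hWb I
      set Ss : Set (Fin d → ℝ) := {w | ∃ k, P k ≠ 0 ∧ τ k = w} with hSsdef
      have hzh_cl : zh ∈ closure (convexHull ℝ Ss) := by
        have hev : ∀ᶠ I in atTop, (s I)⁻¹ • W I ∈ convexHull ℝ Ss := by
          have hev1 : ∀ᶠ I in atTop, (1:ℝ)/2 < s I :=
            hslim1.eventually_const_lt (by norm_num)
          filter_upwards [hev1] with I hsI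
          have hspos : 0 < s I := lt_trans (by norm_num) hsI
          set t : Finset ℕ := (Finset.range I).filter (fun k => P k ≠ 0) with htdef
          have e1 : ∑ k ∈ t, P k = s I := by
            rw [hsdef]
            apply Finset.sum_filter_of_ne
            intro k _ hkne
            exact hkne
          have e2 : ∑ k ∈ t, P k • τ k = W I := by
            rw [hWdef]
            apply Finset.sum_filter_of_ne
            intro k _ hkne hzero
            exact hkne (by rw [hzero, zero_smul])
          have hcm := Finset.centerMass_mem_convexHull (s := Ss) t (w := P) (z := τ)
            (fun k _ => hP0 k) (by rw [e1]; exact hspos)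
            (fun k hk => ⟨k, (Finset.mem_filter.1 hk).2, rfl⟩)
          rw [Finset.centerMass, e1, e2] at hcm
          exact hcm
        have htd : Tendsto (fun I => (s I)⁻¹ • W I) atTop (𝓝 zh) := by
          have h1 : Tendsto (fun I => (s I)⁻¹) atTop (𝓝 1⁻¹) :=
            hslim1.inv₀ one_ne_zero
          have := h1.smul hWlimz
          simpa using this
        exact mem_closure_of_tendsto htd hev
      have hdeg : ∀ ℓ : (Fin d → ℝ) →L[ℝ] ℝ,
          (∀ w ∈ Ss, ℓ w ≤ ℓ zh) → ∀ w ∈ Ss, ℓ w = ℓ zh := by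
        intro ℓ hle w hw
        obtain ⟨k₀, hk₀, rfl⟩ := hw
        set D : ℕ → ℝ := fun I => ∑ k ∈ Finset.range I, P k * (ℓ zh - ℓ (τ k)) with hDdef
        have hterm : ∀ k, 0 ≤ P k * (ℓ zh - ℓ (τ k)) := by
          intro k
          rcases eq_or_ne (P k) 0 with h|h
          · rw [h, zero_mul]
          · have := hle (τ k) ⟨k, h, rfl⟩
            have h2 : 0 ≤ ℓ zh - ℓ (τ k) := by linarith
            exact mul_nonneg (hP0 k) h2
        have hmono : Monotone D := by
          apply monotone_nat_of_le_succ
          intro I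
          rw [hDdef]
          simp only
          rw [Finset.sum_range_succ]
          linarith [hterm I]
        have hDlim : Tendsto D atTop (𝓝 (1 * ℓ zh - ℓ zh)) := by
          have hexp : D = fun I => s I * ℓ zh - ℓ (W I) := by
            funext I
            rw [hDdef, hsdef, hWdef]
            simp only
            rw [map_sum, Finset.sum_mul]
            rw [← Finset.sum_sub_distrib]
            refine Finset.sum_congr rfl fun k _ => ?_
            rw [map_smul]
            simp [smul_eq_mul]
            ring
          rw [hexp]
          have h1 : Tendsto (fun I => s I * ℓ zh) atTop (𝓝 (1 * ℓ zh)) :=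
            hslim1.mul_const (ℓ zh)
          have h2 : Tendsto (fun I => ℓ (W I)) atTop (𝓝 (ℓ zh)) :=
            (ℓ.continuous.tendsto zh).comp hWlimz
          exact h1.sub h2
        have hD0 : ∀ I, D I ≤ 0 := by
          intro I
          have := hmono.ge_of_tendsto hDlim I
          simpa using this
        have h1 : P k₀ * (ℓ zh - ℓ (τ k₀)) ≤ D (k₀+1) := by
          rw [hDdef]
          exact Finset.single_le_sum (fun k _ => hterm k)
            (Finset.mem_range.2 (Nat.lt_succ_self k₀))
        have h2 : P k₀ * (ℓ zh - ℓ (τ k₀)) = 0 :=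
          le_antisymm (h1.trans (hD0 _)) (hterm k₀)
        rcases mul_eq_zero.1 h2 with h3|h3
        · exact absurd h3 hk₀
        · linarith
      have hzhCH : zh ∈ convexHull ℝ Ss := baryGen Ss zh hzh_cl hdeg
      have hzhC : zh ∈ C := by
        have h1 : Ss ⊆ C := by
          rintro w ⟨k, -, rfl⟩
          exact hτC k
        have h2 := convexHull_mono h1 hzhCH
        rwa [hC.convexHull_eq] at h2
      have hzhInt : IsIntegerVec zh := fun j => hint j.castSucc
      have hfin := hClF.2 (fun m => ζ (σ m)) (fun m => ω (σ m)) zh (x, y)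
        (fun m => (hfam (σ m)).1) (fun m => (hfam (σ m)).2) hzhC hζσ
        (hωlim.comp hσ.tendsto_atTop)
      rw [hS]
      exact Set.mem_biUnion (show zh ∈ T from ⟨hzhC, hzhInt⟩)
        ⟨(x, y), hfin, rfl⟩

theorem stmt9 {n : ℕ} (S : Set (Fin n → ℝ)) :
    MICPRepresentable S ↔
      ∃ (d p : ℕ) (C : Set (Fin d → ℝ))
        (B : (Fin d → ℝ) → Set ((Fin n → ℝ) × (Fin p → ℝ))),
        Convex ℝ C ∧ ConvexFamily C B ∧ ClosedFamily C B ∧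
        S = ⋃ z ∈ {z ∈ C | IsIntegerVec z}, Prod.fst '' B z :=
  ⟨fun h => fwdAux S h, fun h => bwdAux S h⟩
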